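/- Convexity of the reparameterized LQR problem: the feasible set ℒ is a convex subset of ℝ^{(m+n)×n} × ℝ^{n×n}, and the function f(L, Σ) = Tr(QΣ) + Tr(LΣ⁻¹LᵀŪ₀ᵀRŪ₀) is convex on ℒ. -/

import Mathlib

open Matrix

noncomputable section

/-- Euclidean norm of a vector. -/
def eNorm {ι : Type*} [Fintype ι] (v : ι → ℝ) : ℝ :=
  Real.sqrt (∑ i, v i ^ 2)

/-- Frobenius norm of a matrix. -/
def frobNorm {ι κ : Type*} [Fintype ι] [Fintype κ] (A : Matrix ι κ ℝ) : ℝ :=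
  Real.sqrt (∑ i, ∑ j, A i j ^ 2)

/-- Spectral (operator 2-) norm of a matrix. -/
def spNorm {ι κ : Type*} [Fintype ι] [Fintype κ] (A : Matrix ι κ ℝ) : ℝ :=
  sSup {r : ℝ | ∃ v : κ → ℝ, eNorm v = 1 ∧ r = eNorm (A.mulVec v)}

/-- Smallest singular value of a matrix `A`, i.e. the square root of the smallest
eigenvalue of `A * Aᵀ`, expressed as `inf_{‖u‖ = 1} ‖Aᵀ u‖`. -/
def sigMin {ι κ : Type*} [Fintype ι] [Fintype κ] (A : Matrix ι κ ℝ) : ℝ :=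
  sInf {r : ℝ | ∃ u : ι → ℝ, eNorm u = 1 ∧ r = eNorm (A.vecMul u)}

/-- `ρ(A) < 1` : the spectral radius of the real square matrix `A` (i.e. the
largest modulus of a complex eigenvalue) is smaller than one. -/
def specLt1 {ι : Type*} [Fintype ι] [DecidableEq ι] (A : Matrix ι ι ℝ) : Prop :=
  spectralRadius ℂ (A.map Complex.ofReal) < 1

/-- Right inverse `M† = Mᵀ (M Mᵀ)⁻¹` of a full-row-rank matrix. -/
def pinv {ι κ : Type*} [Fintype ι] [Fintype κ] [DecidableEq ι] (A : Matrix ι κ ℝ) :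
    Matrix κ ι ℝ :=
  Aᵀ * (A * Aᵀ)⁻¹

/-- Orthogonal projection `Π_A = I - A† A` onto the nullspace of `A`. -/
def projNull {ι κ : Type*} [Fintype ι] [Fintype κ] [DecidableEq ι] [DecidableEq κ]
    (A : Matrix ι κ ℝ) : Matrix κ κ ℝ :=
  1 - pinv A * A

/-- `Σ(M) = ∑_{i≥0} Mⁱ (Mᵀ)ⁱ`, the unique solution of the discrete Lyapunov
equation `Σ = I + M Σ Mᵀ` when `ρ(M) < 1`. -/
def lyap {k : ℕ} (M : Matrix (Fin k) (Fin k) ℝ) : Matrix (Fin k) (Fin k) ℝ :=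
  ∑' i : ℕ, M ^ i * (Mᵀ) ^ i

variable {n m t : ℕ}

/-- Stacked data matrix `D₀ = [U₀; X₀]`. -/
def Dmat (U0 : Matrix (Fin m) (Fin t) ℝ) (X0 : Matrix (Fin n) (Fin t) ℝ) :
    Matrix (Fin m ⊕ Fin n) (Fin t) ℝ :=
  Matrix.fromRows U0 X0

/-- `Ū₀ = (1/t) U₀ D₀ᵀ`. -/
def Ubar (U0 : Matrix (Fin m) (Fin t) ℝ) (X0 : Matrix (Fin n) (Fin t) ℝ) :
    Matrix (Fin m) (Fin m ⊕ Fin n) ℝ :=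
  (t : ℝ)⁻¹ • (U0 * (Dmat U0 X0)ᵀ)

/-- `X̄₀ = (1/t) X₀ D₀ᵀ`. -/
def Xbar0 (U0 : Matrix (Fin m) (Fin t) ℝ) (X0 : Matrix (Fin n) (Fin t) ℝ) :
    Matrix (Fin n) (Fin m ⊕ Fin n) ℝ :=
  (t : ℝ)⁻¹ • (X0 * (Dmat U0 X0)ᵀ)

/-- `X̄₁ = (1/t) X₁ D₀ᵀ`. -/
def Xbar1 (U0 : Matrix (Fin m) (Fin t) ℝ) (X0 X1 : Matrix (Fin n) (Fin t) ℝ) :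
    Matrix (Fin n) (Fin m ⊕ Fin n) ℝ :=
  (t : ℝ)⁻¹ • (X1 * (Dmat U0 X0)ᵀ)

/-- Sample covariance `Φ = (1/t) D₀ D₀ᵀ`. -/
def Phi (U0 : Matrix (Fin m) (Fin t) ℝ) (X0 : Matrix (Fin n) (Fin t) ℝ) :
    Matrix (Fin m ⊕ Fin n) (Fin m ⊕ Fin n) ℝ :=
  (t : ℝ)⁻¹ • (Dmat U0 X0 * (Dmat U0 X0)ᵀ)

/-- The feasible set `S = {V : X̄₀ V = I, ρ(X̄₁ V) < 1}`. -/
def feasSet (U0 : Matrix (Fin m) (Fin t) ℝ) (X0 X1 : Matrix (Fin n) (Fin t) ℝ) :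
    Set (Matrix (Fin m ⊕ Fin n) (Fin n) ℝ) :=
  {V | Xbar0 U0 X0 * V = 1 ∧ specLt1 (Xbar1 U0 X0 X1 * V)}

/-- The closed-loop Lyapunov solution `Σ_V`, i.e. the unique solution of
`Σ_V = I + (X̄₁ V) Σ_V (X̄₁ V)ᵀ` when `V ∈ S`. -/
def SigV (U0 : Matrix (Fin m) (Fin t) ℝ) (X0 X1 : Matrix (Fin n) (Fin t) ℝ)
    (V : Matrix (Fin m ⊕ Fin n) (Fin n) ℝ) : Matrix (Fin n) (Fin n) ℝ :=
  lyap (Xbar1 U0 X0 X1 * V)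

/-- `P_V`, the unique solution of `P = Q + Vᵀ Ū₀ᵀ R Ū₀ V + (X̄₁V)ᵀ P (X̄₁V)`
when `V ∈ S`, given by its convergent series. -/
def PV (U0 : Matrix (Fin m) (Fin t) ℝ) (X0 X1 : Matrix (Fin n) (Fin t) ℝ)
    (Q : Matrix (Fin n) (Fin n) ℝ) (R : Matrix (Fin m) (Fin m) ℝ)
    (V : Matrix (Fin m ⊕ Fin n) (Fin n) ℝ) : Matrix (Fin n) (Fin n) ℝ :=
  ∑' i : ℕ, ((Xbar1 U0 X0 X1 * V)ᵀ) ^ i *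
      (Q + Vᵀ * (Ubar U0 X0)ᵀ * R * Ubar U0 X0 * V) * (Xbar1 U0 X0 X1 * V) ^ i

/-- The covariance-parameterized LQR cost `J(V)`. -/
def Jcost (U0 : Matrix (Fin m) (Fin t) ℝ) (X0 X1 : Matrix (Fin n) (Fin t) ℝ)
    (Q : Matrix (Fin n) (Fin n) ℝ) (R : Matrix (Fin m) (Fin m) ℝ)
    (V : Matrix (Fin m ⊕ Fin n) (Fin n) ℝ) : ℝ :=
  Matrix.trace ((Q + Vᵀ * (Ubar U0 X0)ᵀ * R * Ubar U0 X0 * V) * SigV U0 X0 X1 V)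

/-- `J* = inf_{V ∈ S} J(V)`. -/
def Jstar (U0 : Matrix (Fin m) (Fin t) ℝ) (X0 X1 : Matrix (Fin n) (Fin t) ℝ)
    (Q : Matrix (Fin n) (Fin n) ℝ) (R : Matrix (Fin m) (Fin m) ℝ) : ℝ :=
  sInf (Jcost U0 X0 X1 Q R '' feasSet U0 X0 X1)

/-- Sublevel set `S(a) = {V ∈ S : J(V) ≤ a}`. -/
def subLevel (U0 : Matrix (Fin m) (Fin t) ℝ) (X0 X1 : Matrix (Fin n) (Fin t) ℝ)
    (Q : Matrix (Fin n) (Fin n) ℝ) (R : Matrix (Fin m) (Fin m) ℝ) (a : ℝ) :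
    Set (Matrix (Fin m ⊕ Fin n) (Fin n) ℝ) :=
  {V | V ∈ feasSet U0 X0 X1 ∧ Jcost U0 X0 X1 Q R V ≤ a}

/-- The gradient `∇J(V) = 2 (Ū₀ᵀ R Ū₀ + X̄₁ᵀ P_V X̄₁) V Σ_V`. -/
def gradJ (U0 : Matrix (Fin m) (Fin t) ℝ) (X0 X1 : Matrix (Fin n) (Fin t) ℝ)
    (Q : Matrix (Fin n) (Fin n) ℝ) (R : Matrix (Fin m) (Fin m) ℝ)
    (V : Matrix (Fin m ⊕ Fin n) (Fin n) ℝ) : Matrix (Fin m ⊕ Fin n) (Fin n) ℝ :=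
  (2 : ℝ) • (((Ubar U0 X0)ᵀ * R * Ubar U0 X0 +
      (Xbar1 U0 X0 X1)ᵀ * PV U0 X0 X1 Q R V * Xbar1 U0 X0 X1) * V * SigV U0 X0 X1 V)

/-- `ξ(a) = ‖Ū₀‖² ‖R‖ + ‖X̄₁‖² a`. -/
def xiC (U0 : Matrix (Fin m) (Fin t) ℝ) (X0 X1 : Matrix (Fin n) (Fin t) ℝ)
    (R : Matrix (Fin m) (Fin m) ℝ) (a : ℝ) : ℝ :=
  spNorm (Ubar U0 X0) ^ 2 * spNorm R + spNorm (Xbar1 U0 X0 X1) ^ 2 * a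

/-- Smoothness constant `l(a)`. -/
def lC (U0 : Matrix (Fin m) (Fin t) ℝ) (X0 X1 : Matrix (Fin n) (Fin t) ℝ)
    (Q : Matrix (Fin n) (Fin n) ℝ) (R : Matrix (Fin m) (Fin m) ℝ) (a : ℝ) : ℝ :=
  4 * a ^ 2 * (xiC U0 X0 X1 R a + a - sigMin Q) * frobNorm (Xbar1 U0 X0 X1) ^ 2 / sigMin Q ^ 2 +
    2 * xiC U0 X0 X1 R a * a / sigMin Q

/-- Gradient-dominance constant `μ(a) = 4a²/(σ̲(Q)^{3/2} σ̲(R)^{1/2} σ̲(Ū₀))`. -/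
def muC (U0 : Matrix (Fin m) (Fin t) ℝ) (X0 : Matrix (Fin n) (Fin t) ℝ)
    (Q : Matrix (Fin n) (Fin n) ℝ) (R : Matrix (Fin m) (Fin m) ℝ) (a : ℝ) : ℝ :=
  4 * a ^ 2 / (Real.sqrt (sigMin Q) ^ 3 * Real.sqrt (sigMin R) * sigMin (Ubar U0 X0))

/-- Reparameterized cost `f(L, Σ) = Tr(QΣ) + Tr(L Σ⁻¹ Lᵀ Ū₀ᵀ R Ū₀)`. -/
def fRep (U0 : Matrix (Fin m) (Fin t) ℝ) (X0 : Matrix (Fin n) (Fin t) ℝ)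
    (Q : Matrix (Fin n) (Fin n) ℝ) (R : Matrix (Fin m) (Fin m) ℝ)
    (L : Matrix (Fin m ⊕ Fin n) (Fin n) ℝ) (Sg : Matrix (Fin n) (Fin n) ℝ) : ℝ :=
  Matrix.trace (Q * Sg) + Matrix.trace (L * Sg⁻¹ * Lᵀ * (Ubar U0 X0)ᵀ * R * Ubar U0 X0)

/-- Feasible set `ℒ` of the convex reparameterization. -/
def repSet (U0 : Matrix (Fin m) (Fin t) ℝ) (X0 X1 : Matrix (Fin n) (Fin t) ℝ) :
    Set (Matrix (Fin m ⊕ Fin n) (Fin n) ℝ × Matrix (Fin n) (Fin n) ℝ) :=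
  {p | p.2.IsSymm ∧ p.2 = Xbar0 U0 X0 * p.1 ∧
    (Matrix.fromBlocks (p.2 - 1) (Xbar1 U0 X0 X1 * p.1)
      ((Xbar1 U0 X0 X1 * p.1)ᵀ) p.2).PosSemidef}

/-- `p(a) = (16a³/(σ̲(Q)²ζ)) (1 + a/σ̲(Q)) (1 + √(a/σ̲(R)))`. -/
def pC (Q : Matrix (Fin n) (Fin n) ℝ) (R : Matrix (Fin m) (Fin m) ℝ) (ζ a : ℝ) : ℝ :=
  16 * a ^ 3 / (sigMin Q ^ 2 * ζ) * (1 + a / sigMin Q) * (1 + Real.sqrt (a / sigMin R))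


section Helpers

open Matrix

variable {ι κ : Type*} [Fintype ι] [Fintype κ]

lemma psd_smul {M : Matrix ι ι ℝ} (hM : M.PosSemidef) {c : ℝ} (hc : 0 ≤ c) :
    (c • M).PosSemidef := by
  refine ⟨?_, fun x => ?_⟩
  · show (c • M)ᴴ = c • M
    rw [conjTranspose_smul, star_trivial, hM.1.eq]
  · exact (hM.smul hc).2 x

lemma psd_trace_nonneg [DecidableEq ι] {M : Matrix ι ι ℝ} (hM : M.PosSemidef) :
    0 ≤ M.trace := by
  rw [Matrix.trace]
  refine Finset.sum_nonneg fun i _ => ?_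
  have := hM.dotProduct_mulVec_nonneg (Pi.single i 1)
  simpa [Matrix.mulVec_single, Matrix.diag] using this

lemma trace_mul_psd_nonneg [DecidableEq ι] {A B : Matrix ι ι ℝ}
    (hA : A.PosSemidef) (hB : B.PosSemidef) : 0 ≤ (A * B).trace := by
  open scoped MatrixOrder in
  obtain ⟨C, rfl⟩ := CStarAlgebra.nonneg_iff_eq_star_mul_self.mp hB.nonneg
  rw [← Matrix.mul_assoc, Matrix.trace_mul_comm, ← Matrix.mul_assoc]
  exact psd_trace_nonneg (hA.mul_mul_conjTranspose_same C)

lemma frac_block_psd [DecidableEq κ] {Sg : Matrix κ κ ℝ} (hS : Sg.PosDef)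
    (L : Matrix ι κ ℝ) :
    (Matrix.fromBlocks Sg Lᵀ L (L * Sg⁻¹ * Lᵀ)).PosSemidef := by
  classical
  have : Invertible Sg := hS.isUnit.invertible
  have h : (Lᵀ)ᴴ = L := by
    rw [conjTranspose_eq_transpose_of_trivial, transpose_transpose]
  have h2 := (Matrix.PosDef.fromBlocks₁₁ Lᵀ (L * Sg⁻¹ * Lᵀ) hS).mpr
    (by rw [h]; simpa [sub_self] using
      (Matrix.PosSemidef.zero : (0 : Matrix ι ι ℝ).PosSemidef))
  rwa [h] at h2

lemma frac_le [DecidableEq κ] {Sg : Matrix κ κ ℝ} {Y : Matrix ι ι ℝ}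
    (hS : Sg.PosDef) (L : Matrix ι κ ℝ)
    (h : (Matrix.fromBlocks Sg Lᵀ L Y).PosSemidef) :
    (Y - L * Sg⁻¹ * Lᵀ).PosSemidef := by
  classical
  have : Invertible Sg := hS.isUnit.invertible
  have hT : (Lᵀ)ᴴ = L := by
    rw [conjTranspose_eq_transpose_of_trivial, transpose_transpose]
  have h' : (Matrix.fromBlocks Sg Lᵀ ((Lᵀ)ᴴ) Y).PosSemidef := by rwa [hT]
  have h2 := (Matrix.PosDef.fromBlocks₁₁ _ _ hS).mp h'
  rwa [hT] at h2

end Helpers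

lemma repSet_snd_posDef {n m t : ℕ} {U0 : Matrix (Fin m) (Fin t) ℝ}
    {X0 X1 : Matrix (Fin n) (Fin t) ℝ}
    {p : Matrix (Fin m ⊕ Fin n) (Fin n) ℝ × Matrix (Fin n) (Fin n) ℝ}
    (hp : p ∈ repSet U0 X0 X1) : p.2.PosDef := by
  have hsub := hp.2.2.submatrix (Sum.inr : Fin n → Fin n ⊕ Fin n)
  have heq : (Matrix.fromBlocks (p.2 - 1) (Xbar1 U0 X0 X1 * p.1)
      ((Xbar1 U0 X0 X1 * p.1)ᵀ) p.2).submatrix (Sum.inr : Fin n → Fin n ⊕ Fin n)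
      (Sum.inr : Fin n → Fin n ⊕ Fin n) = p.2 := by
    ext i j; simp [Matrix.fromBlocks]
  rw [heq] at hsub
  have hsub1 := hp.2.2.submatrix (Sum.inl : Fin n → Fin n ⊕ Fin n)
  have heq1 : (Matrix.fromBlocks (p.2 - 1) (Xbar1 U0 X0 X1 * p.1)
      ((Xbar1 U0 X0 X1 * p.1)ᵀ) p.2).submatrix (Sum.inl : Fin n → Fin n ⊕ Fin n)
      (Sum.inl : Fin n → Fin n ⊕ Fin n) = p.2 - 1 := by
    ext i j; simp [Matrix.fromBlocks]
  rw [heq1] at hsub1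
  have heq2 : p.2 = (p.2 - 1) + 1 := by abel
  rw [heq2]
  exact Matrix.PosDef.posSemidef_add hsub1 Matrix.PosDef.one

/-- Convexity of the reparameterized LQR problem (Lemma 10). -/
theorem stmt_8 {n m t : ℕ} (hn : 0 < n) (hm : 0 < m) (ht : 0 < t)
    (U0 : Matrix (Fin m) (Fin t) ℝ) (X0 X1 : Matrix (Fin n) (Fin t) ℝ)
    (Q : Matrix (Fin n) (Fin n) ℝ) (R : Matrix (Fin m) (Fin m) ℝ)
    (hQ : Q.PosDef) (hR : R.PosDef)
    (hrank : (Dmat U0 X0).rank = m + n) :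
    Convex ℝ (repSet U0 X0 X1) ∧
    ConvexOn ℝ (repSet U0 X0 X1) (fun p => fRep U0 X0 Q R p.1 p.2) := by
  have hconv : Convex ℝ (repSet U0 X0 X1) := by
    intro p hp q hq a b ha hb hab
    obtain ⟨hs1, he1, hb1⟩ := hp
    obtain ⟨hs2, he2, hb2⟩ := hq
    have h1 : (a • p.2 + b • q.2) - 1 = a • (p.2 - 1) + b • (q.2 - 1) := by
      ext i j
      simp only [Matrix.sub_apply, Matrix.add_apply, Matrix.smul_apply, smul_eq_mul,
        Matrix.one_apply, mul_sub, mul_ite, mul_one, mul_zero]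
      split
      · linarith
      · ring
    refine ⟨?_, ?_, ?_⟩
    · show (a • p.2 + b • q.2)ᵀ = a • p.2 + b • q.2
      rw [transpose_add, transpose_smul, transpose_smul, hs1.eq, hs2.eq]
    · show a • p.2 + b • q.2 = Xbar0 U0 X0 * (a • p.1 + b • q.1)
      rw [Matrix.mul_add, Matrix.mul_smul, Matrix.mul_smul, ← he1, ← he2]
    · show (Matrix.fromBlocks ((a • p.2 + b • q.2) - 1)
        (Xbar1 U0 X0 X1 * (a • p.1 + b • q.1))
        ((Xbar1 U0 X0 X1 * (a • p.1 + b • q.1))ᵀ)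
        (a • p.2 + b • q.2)).PosSemidef
      have hsum := (psd_smul hb1 ha).add (psd_smul hb2 hb)
      rw [Matrix.fromBlocks_smul, Matrix.fromBlocks_smul,
        Matrix.fromBlocks_add] at hsum
      have h2 : Xbar1 U0 X0 X1 * (a • p.1 + b • q.1)
          = a • (Xbar1 U0 X0 X1 * p.1) + b • (Xbar1 U0 X0 X1 * q.1) := by
        rw [Matrix.mul_add, Matrix.mul_smul, Matrix.mul_smul]
      rw [h1, h2, transpose_add, transpose_smul, transpose_smul]
      exact hsum
  refine ⟨hconv, hconv, ?_⟩
  intro p hp q hq a b ha hb hab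
  have hS1 : p.2.PosDef := repSet_snd_posDef hp
  have hS2 : q.2.PosDef := repSet_snd_posDef hq
  have hmem := hconv hp hq ha hb hab
  have hSc : (a • p.2 + b • q.2).PosDef := repSet_snd_posDef hmem
  set M : Matrix (Fin m ⊕ Fin n) (Fin m ⊕ Fin n) ℝ :=
    (Ubar U0 X0)ᵀ * R * Ubar U0 X0 with hMdef
  have hM : M.PosSemidef := by
    have := hR.posSemidef.conjTranspose_mul_mul_same (Ubar U0 X0)
    rwa [conjTranspose_eq_transpose_of_trivial] at this
  -- joint convexity of the matrix fractional function
  have hsum := (psd_smul (frac_block_psd hS1 p.1) ha).add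
    (psd_smul (frac_block_psd hS2 q.1) hb)
  rw [Matrix.fromBlocks_smul, Matrix.fromBlocks_smul,
    Matrix.fromBlocks_add] at hsum
  have hfr := frac_le hSc (a • p.1 + b • q.1)
    (by rw [transpose_add, transpose_smul, transpose_smul]; exact hsum)
  have htr := trace_mul_psd_nonneg hfr hM
  have htr' : 0 ≤ a * Matrix.trace (p.1 * p.2⁻¹ * p.1ᵀ * M)
      + b * Matrix.trace (q.1 * q.2⁻¹ * q.1ᵀ * M)
      - Matrix.trace ((a • p.1 + b • q.1) * (a • p.2 + b • q.2)⁻¹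
          * (a • p.1 + b • q.1)ᵀ * M) := by
    rw [Matrix.sub_mul, Matrix.add_mul, Matrix.smul_mul, Matrix.smul_mul,
      Matrix.trace_sub, Matrix.trace_add, Matrix.trace_smul, Matrix.trace_smul,
      smul_eq_mul, smul_eq_mul] at htr
    linarith
  have eQ : Matrix.trace (Q * (a • p.2 + b • q.2))
      = a * Matrix.trace (Q * p.2) + b * Matrix.trace (Q * q.2) := by
    rw [Matrix.mul_add, Matrix.mul_smul, Matrix.mul_smul, Matrix.trace_add,
      Matrix.trace_smul, Matrix.trace_smul, smul_eq_mul, smul_eq_mul]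
  have assoc : ∀ (L : Matrix (Fin m ⊕ Fin n) (Fin n) ℝ)
      (S : Matrix (Fin n) (Fin n) ℝ),
      Matrix.trace (L * S⁻¹ * Lᵀ * (Ubar U0 X0)ᵀ * R * Ubar U0 X0)
        = Matrix.trace (L * S⁻¹ * Lᵀ * M) := by
    intro L S
    rw [hMdef]
    simp only [Matrix.mul_assoc]
  show Matrix.trace (Q * (a • p.2 + b • q.2))
      + Matrix.trace ((a • p.1 + b • q.1) * (a • p.2 + b • q.2)⁻¹
          * (a • p.1 + b • q.1)ᵀ * (Ubar U0 X0)ᵀ * R * Ubar U0 X0)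
      ≤ a • (Matrix.trace (Q * p.2)
          + Matrix.trace (p.1 * p.2⁻¹ * p.1ᵀ * (Ubar U0 X0)ᵀ * R * Ubar U0 X0))
        + b • (Matrix.trace (Q * q.2)
          + Matrix.trace (q.1 * q.2⁻¹ * q.1ᵀ * (Ubar U0 X0)ᵀ * R * Ubar U0 X0))
  rw [assoc, assoc, assoc, eQ, smul_eq_mul, smul_eq_mul]
  ring_nf
  nlinarith [htr']
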